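/- Finite-horizon policy improvement: let πb be a policy and let σ be a nonstationary policy such that for every k and every state s one has g s (σ (k+1) s) + V πb k (f s (σ (k+1) s)) ≤ V πb (k+1) s. Then for every k and every state s, J σ k s ≤ V πb k s. -/

import Mathlib

/-- k-step cost of a stationary policy `π`:
`V π 0 s = 0` and `V π (k+1) s = g s (π s) + V π k (f s (π s))`. -/
def polCost {S A : Type*} (f : S → A → S) (g : S → A → ℝ) (π : S → A) : ℕ → S → ℝ
  | 0 => fun _ => 0
  | k + 1 => fun s => g s (π s) + polCost f g π k (f s (π s))

/-- Cost of a nonstationary policy `σ`: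
`J σ 0 s = 0` and `J σ (k+1) s = g s (σ (k+1) s) + J σ k (f s (σ (k+1) s))`. -/
def nonstatCost {S A : Type*} (f : S → A → S) (g : S → A → ℝ) (σ : ℕ → S → A) : ℕ → S → ℝ
  | 0 => fun _ => 0
  | k + 1 => fun s => g s (σ (k + 1) s) + nonstatCost f g σ k (f s (σ (k + 1) s))

/-- Finite-horizon policy improvement. -/
theorem finite_horizon_policy_improvement
    {S A : Type*} (adm : S → Finset A) (hadm : ∀ s, (adm s).Nonempty)
    (f : S → A → S) (g : S → A → ℝ) (hg : ∀ s a, 0 ≤ g s a)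
    (πb : S → A) (hπb : ∀ s, πb s ∈ adm s)
    (σ : ℕ → S → A) (hσ : ∀ k s, σ k s ∈ adm s)
    (h : ∀ k s, g s (σ (k + 1) s) + polCost f g πb k (f s (σ (k + 1) s))
        ≤ polCost f g πb (k + 1) s) :
    ∀ k s, nonstatCost f g σ k s ≤ polCost f g πb k s := by
  intro k
  induction k with
  | zero => intro s; simp [nonstatCost, polCost]
  | succ n ih =>
      intro s
      calc nonstatCost f g σ (n + 1) s
          = g s (σ (n + 1) s) + nonstatCost f g σ n (f s (σ (n + 1) s)) := rfl
        _ ≤ g s (σ (n + 1) s) + polCost f g πb n (f s (σ (n + 1) s)) := by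
            exact add_le_add_right (ih _) _
        _ ≤ polCost f g πb (n + 1) s := h n s
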